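/- arXiv:1105.2544 — 4 statements merged into one kernel-verified Lean document; each statement's English description precedes it below -/
import Mathlib

section
/- Let d₁,...,d_n be positive integers with d = d₁+···+d_n. For any multihomogeneous element w of N⟨x₁,...,x_n⟩ of multidegree (d₁,...,d_n), the image of w under the homomorphism x_i ↦ x^{λ_i} into the Novikov algebra A(λ) has the form f_w(λ)·x^{d₁λ₁+···+d_nλ_n−d+1} for some polynomial f_w ∈ k[λ₁,...,λ_n]. -/
/-- A (not necessarily unital or associative) ring `B` is *Novikov* if it satisfies the
right-symmetric identity `(ab)c − a(bc) = (ac)b − a(cb)` and the identity `a(bc) = b(ac)`. -/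
def IsNovikov (B : Type*) [NonUnitalNonAssocRing B] : Prop :=
  (∀ a b c : B, (a * b) * c - a * (b * c) = (a * c) * b - a * (c * b)) ∧
  (∀ a b c : B, a * (b * c) = b * (a * c))

/-- `ι : X → N` exhibits `N` as the free Novikov algebra over `k` on the set `X`:
`N` is a Novikov algebra and any map from `X` into a Novikov `k`-algebra `B` extends
uniquely to a `k`-algebra homomorphism `N → B`. -/
structure IsFreeNovikov (k : Type u) [Field k] {X : Type v} {N : Type w}
    [NonUnitalNonAssocRing N] [Module k N] [IsScalarTower k N N] [SMulCommClass k N N]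
    (ι : X → N) : Prop where
  novikov : IsNovikov N
  lift : ∀ (B : Type u') [NonUnitalNonAssocRing B] [Module k B] [IsScalarTower k B B]
      [SMulCommClass k B B], IsNovikov B → ∀ f : X → B,
      ∃! φ : N →ₙₐ[k] B, ∀ x, φ (ι x) = f x


/-- Multihomogeneous Novikov monomials: `NovMonomial ι a d` means `a` is a product (in some
arrangement of parentheses) of the generators `ι i`, with `i` occurring `d i` times. -/
inductive NovMonomial {n : ℕ} {N : Type*} [Mul N] (ι : Fin n → N) : N → (Fin n → ℕ) → Prop
  | gen (i : Fin n) : NovMonomial ι (ι i) (Pi.single i 1)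
  | mul {a b : N} {d e : Fin n → ℕ} :
      NovMonomial ι a d → NovMonomial ι b e → NovMonomial ι (a * b) (d + e)

/-- The derivation `D` of the group algebra `G` of `{x^f : f ∈ k[λ]}` over `k[λ]`,
`D(x^f) = f·x^{f−1}`, as a bare function; the Novikov product on `G` is `a∘b = D(a)·b`. -/
noncomputable def Dfun {k : Type*} [Field k] {n : ℕ}
    (a : AddMonoidAlgebra (MvPolynomial (Fin n) k) (MvPolynomial (Fin n) k)) :
    AddMonoidAlgebra (MvPolynomial (Fin n) k) (MvPolynomial (Fin n) k) :=
  Finsupp.sum a.coeff fun f r => AddMonoidAlgebra.single (f - 1) (r * f)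


noncomputable abbrev Eexp {k : Type*} [Field k] {n : ℕ} (d : Fin n → ℕ) :
    MvPolynomial (Fin n) k :=
  (∑ i, (d i : MvPolynomial (Fin n) k) * MvPolynomial.X i) -
    ((∑ i, d i : ℕ) : MvPolynomial (Fin n) k) + 1

lemma Dfun_single {k : Type*} [Field k] {n : ℕ} (f r : MvPolynomial (Fin n) k) :
    Dfun (AddMonoidAlgebra.single f r) = AddMonoidAlgebra.single (f - 1) (r * f) := by
  unfold Dfun
  rw [AddMonoidAlgebra.coeff_single, Finsupp.sum_single_index]
  simp

lemma Eexp_add {k : Type*} [Field k] {n : ℕ} (d e : Fin n → ℕ) :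
    Eexp (k := k) d - 1 + Eexp (k := k) e = Eexp (k := k) (d + e) := by
  unfold Eexp
  simp only [Pi.add_apply, Nat.cast_add, add_mul, Finset.sum_add_distrib]
  ring

lemma Eexp_single {k : Type*} [Field k] {n : ℕ} (i : Fin n) :
    Eexp (k := k) (Pi.single i 1) = MvPolynomial.X i := by
  unfold Eexp
  have h1 : (∑ j, ((Pi.single i 1 : Fin n → ℕ) j : MvPolynomial (Fin n) k)
      * MvPolynomial.X j) = MvPolynomial.X i := by
    rw [Finset.sum_eq_single i]
    · simp
    · intro j _ hj; rw [Pi.single_eq_of_ne hj]; simp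
    · simp
  have h2 : (∑ j, (Pi.single i 1 : Fin n → ℕ) j) = 1 := by
    simp [Finset.sum_pi_single']
  rw [h1, h2]
  push_cast
  ring

/-- Let `d₁,…,dₙ` be positive integers with `d = d₁+⋯+dₙ`. For any
multihomogeneous element `w` of the free Novikov algebra of multidegree `(d₁,…,dₙ)`, the
image of `w` under the homomorphism `xᵢ ↦ x^{λᵢ}` into the Novikov algebra `A(λ) ⊆ G`
(with product `a∘b = D(a)·b`) has the form `f_w(λ)·x^{d₁λ₁+⋯+dₙλₙ−d+1}` for some
polynomial `f_w ∈ k[λ₁,…,λₙ]`. -/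
theorem freeNovikov_multihomogeneous_image (k : Type*) [Field k] [CharZero k] (n : ℕ)
    (N : Type*) [NonUnitalNonAssocRing N] [Module k N]
    [IsScalarTower k N N] [SMulCommClass k N N]
    (ι : Fin n → N) (hN : IsFreeNovikov k ι)
    (Φ : N →ₗ[k] AddMonoidAlgebra (MvPolynomial (Fin n) k) (MvPolynomial (Fin n) k))
    (hΦmul : ∀ a b : N, Φ (a * b) = Dfun (Φ a) * Φ b)
    (hΦgen : ∀ i : Fin n, Φ (ι i) = AddMonoidAlgebra.single (MvPolynomial.X i) 1)
    (d : Fin n → ℕ) (hd : ∀ i, 0 < d i) (w : N)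
    (hw : w ∈ Submodule.span k {a : N | NovMonomial ι a d}) :
    ∃ fw : MvPolynomial (Fin n) k,
      Φ w = AddMonoidAlgebra.single
        ((∑ i, (d i : MvPolynomial (Fin n) k) * MvPolynomial.X i) -
          ((∑ i, d i : ℕ) : MvPolynomial (Fin n) k) + 1) fw := by
  set E : (Fin n → ℕ) → MvPolynomial (Fin n) k := fun d => Eexp d with hE
  have key : ∀ (a : N) (e : Fin n → ℕ), NovMonomial ι a e →
      ∃ r, Φ a = AddMonoidAlgebra.single (E e) r := by
    intro a e h
    induction h with
    | gen i => exact ⟨1, by rw [hΦgen]; simp only [hE, Eexp_single]⟩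
    | @mul a1 b1 d1 e1 ha hb iha ihb =>
      obtain ⟨r, hr⟩ := iha
      obtain ⟨s, hs⟩ := ihb
      refine ⟨r * Eexp d1 * s, ?_⟩
      rw [hΦmul, hr, hs, Dfun_single, AddMonoidAlgebra.single_mul_single]
      simp only [hE, Eexp_add]
  have hsub : Submodule.span k {a : N | NovMonomial ι a d} ≤
      (LinearMap.range (AddMonoidAlgebra.lsingle (S := MvPolynomial (Fin n) k)
        (R := k) (E d))).comap Φ := by
    rw [Submodule.span_le]
    intro a ha
    obtain ⟨r, hr⟩ := key a d ha
    exact ⟨r, hr.symm⟩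
  obtain ⟨fw, hfw⟩ := hsub hw
  exact ⟨fw, hfw.symm⟩
end

section
/- If a nonzero linear combination Σ_T α_T f_T of the polynomials f_T ∈ k[λ₁,...,λ_n] is formed over all Novikov tableaux T of degree n on distinct letters x₁,...,x_n, then this combination is a nonzero polynomial; i.e., the family {f_T : T ∈ 𝕋_n} is linearly independent over k. -/
/-- A Novikov tableau on the letters `{x₀,…,x_{n−1}}` (indexed by `Fin n`): a Young
diagram with `m` rows of lengths `r 0 ≥ r 1 ≥ ⋯ > 0`, together with an extra box (the
"nose") attached to the first row, each box filled with a letter, subject to the filling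
rules: (F1) in equal-length rows the first-column entries do not increase downwards;
(F2) the entries in columns `≥ 2`, read row by row from the bottom row to the top row,
left to right, followed by the nose, form a non-decreasing sequence. -/
structure NovikovTableau (n : ℕ) where
  /-- number of rows of the Young diagram -/
  m : ℕ
  mpos : 0 < m
  /-- lengths of the rows of the Young diagram (the nose is counted separately) -/
  r : Fin m → ℕ
  rpos : ∀ i, 0 < r i
  anti : ∀ i j : Fin m, i ≤ j → r j ≤ r i
  /-- the letter in box `(i,j)` of the Young diagram -/
  entry : (i : Fin m) → Fin (r i) → Fin n
  /-- the letter in the extra box attached to the first row -/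
  nose : Fin n
  F1 : ∀ i j : Fin m, i ≤ j → r i = r j → entry j ⟨0, rpos j⟩ ≤ entry i ⟨0, rpos i⟩
  F2 : ∀ (i i' : Fin m) (j : Fin (r i)) (j' : Fin (r i')), 1 ≤ (j : ℕ) → 1 ≤ (j' : ℕ) →
      (i' < i ∨ (i = i' ∧ (j : ℕ) ≤ (j' : ℕ))) → entry i j ≤ entry i' j'
  F2nose : ∀ (i : Fin m) (j : Fin (r i)), 1 ≤ (j : ℕ) → entry i j ≤ nose

/-- The degree of a Novikov tableau: the total number of boxes, including the nose. -/
def NovikovTableau.degree {n : ℕ} (T : NovikovTableau n) : ℕ := (∑ i, T.r i) + 1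

/-- The polynomial `f_T ∈ k[λ₀,…,λ_{n−1}]` of a Novikov tableau `T`:
`f_T = ∏ᵢ λ_{i,1}(λ_{i,1}+λ_{i,2}−1)⋯(λ_{i,1}+⋯+λ_{i,rᵢ}−rᵢ+1)`, where `λ_{i,j}` is the
variable corresponding to the letter in box `(i,j)`. -/
noncomputable def NovikovTableau.fT (k : Type*) [Field k] {n : ℕ} (T : NovikovTableau n) :
    MvPolynomial (Fin n) k :=
  ∏ i : Fin T.m, ∏ t : Fin (T.r i),
    ((∑ j : Fin ((t : ℕ) + 1), MvPolynomial.X (T.entry i (Fin.castLE t.isLt j))) -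
      MvPolynomial.C ((t : ℕ) : k))

/-- The linear polynomial `g_T = d₀λ₀+⋯+d_{n−1}λ_{n−1} − d + 1` of a Novikov tableau `T`
of degree `d` in which the letter `xᵢ` occurs `dᵢ` times (the sum ranges over all boxes,
including the nose). -/
noncomputable def NovikovTableau.gT (k : Type*) [Field k] {n : ℕ} (T : NovikovTableau n) :
    MvPolynomial (Fin n) k :=
  ((∑ i : Fin T.m, ∑ j : Fin (T.r i), MvPolynomial.X (T.entry i j)) +
      MvPolynomial.X T.nose) - MvPolynomial.C (((∑ i, T.r i : ℕ) : k))

/-- A Novikov tableau belongs to `𝕋_n` (is multilinear) if it has degree `n` and each of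
the `n` letters occurs exactly once, i.e. the filling is injective on boxes. -/
def NovikovTableau.Multilinear {n : ℕ} (T : NovikovTableau n) : Prop :=
  T.degree = n ∧
  Function.Injective fun p : Option ((i : Fin T.m) × Fin (T.r i)) =>
    p.elim T.nose fun q => T.entry q.1 q.2

namespace NovikovTableau

variable {n : ℕ}

/-- The first entry of row `i`. -/
def first (T : NovikovTableau n) (i : Fin T.m) : Fin n := T.entry i ⟨0, T.rpos i⟩

/-- The set of first-column entries. -/
def firstSet (T : NovikovTableau n) : Finset (Fin n) := Finset.image T.first Finset.univ

/-- The weight of a letter: the length of the row it heads, `0` otherwise. -/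
def wt (T : NovikovTableau n) (v : Fin n) : ℕ :=
  ∑ i : Fin T.m, if T.first i = v then T.r i else 0

variable {T T' : NovikovTableau n}

lemma box_inj (hT : T.Multilinear) {i i' : Fin T.m} {j : Fin (T.r i)} {j' : Fin (T.r i')}
    (h : T.entry i j = T.entry i' j') :
    (⟨i, j⟩ : (i : Fin T.m) × Fin (T.r i)) = ⟨i', j'⟩ := by
  have h2 := hT.2 (a₁ := some ⟨i, j⟩) (a₂ := some ⟨i', j'⟩) h
  exact Option.some_injective _ h2

lemma entry_ne_nose (hT : T.Multilinear) {i : Fin T.m} {j : Fin (T.r i)} :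
    T.entry i j ≠ T.nose := by
  intro h
  have h2 := hT.2 (a₁ := some ⟨i, j⟩) (a₂ := none) h
  simp at h2

lemma first_injective (hT : T.Multilinear) : Function.Injective T.first := by
  intro i i' h
  have := box_inj hT h
  exact (Sigma.mk.inj_iff.1 this).1

lemma nose_not_mem_firstSet (hT : T.Multilinear) : T.nose ∉ T.firstSet := by
  intro h
  obtain ⟨i, -, hi⟩ := Finset.mem_image.1 h
  exact entry_ne_nose hT hi

lemma mem_firstSet_iff {v : Fin n} : v ∈ T.firstSet ↔ ∃ i, T.first i = v := by
  simp [firstSet]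

lemma exists_box (hT : T.Multilinear) (v : Fin n) :
    v = T.nose ∨ ∃ i j, T.entry i j = v := by
  have hbij : Function.Bijective
      (fun p : Option ((i : Fin T.m) × Fin (T.r i)) =>
        p.elim T.nose fun q => T.entry q.1 q.2) := by
    rw [Fintype.bijective_iff_injective_and_card]
    refine ⟨hT.2, ?_⟩
    have h1 : Fintype.card (Option ((i : Fin T.m) × Fin (T.r i))) = (∑ i, T.r i) + 1 := by
      simp [Fintype.card_option, Fintype.card_sigma]
    rw [h1, Fintype.card_fin]
    exact hT.1
  obtain ⟨p, hp⟩ := hbij.2 v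
  cases p with
  | none => exact Or.inl hp.symm
  | some q => exact Or.inr ⟨q.1, q.2, hp⟩

lemma lt_nose (hT : T.Multilinear) {v : Fin n} (h1 : v ≠ T.nose) (h2 : v ∉ T.firstSet) :
    v < T.nose := by
  rcases exists_box hT v with h | ⟨i, j, hj⟩
  · exact absurd h h1
  · have hjv : 1 ≤ (j : ℕ) := by
      by_contra hc
      apply h2
      rw [mem_firstSet_iff]
      refine ⟨i, ?_⟩
      rw [← hj]
      have hval : (j : ℕ) = 0 := by omega
      have hj0 : j = ⟨0, T.rpos i⟩ := Fin.ext hval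
      rw [hj0]
      rfl
    subst hj
    exact lt_of_le_of_ne (T.F2nose i j hjv) (entry_ne_nose hT)

lemma wt_first (hT : T.Multilinear) (i : Fin T.m) : T.wt (T.first i) = T.r i := by
  unfold wt
  rw [Finset.sum_eq_single i]
  · simp
  · intro b _ hb
    exact if_neg fun hc => hb (first_injective hT hc)
  · intro h
    exact absurd (Finset.mem_univ i) h

lemma wt_eq_zero {v : Fin n} (hv : v ∉ T.firstSet) : T.wt v = 0 :=
  Finset.sum_eq_zero fun i _ =>
    if_neg fun h => hv (mem_firstSet_iff.2 ⟨i, h⟩)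

lemma mem_firstSet_of_wt_ne {v : Fin n} (h : T.wt v ≠ 0) : v ∈ T.firstSet := by
  by_contra hc
  exact h (wt_eq_zero hc)

section Eval

variable (k : Type*) [Field k]

lemma eval_fT (T : NovikovTableau n) (q : Fin n → ℕ) :
    MvPolynomial.eval (fun v => (q v : k)) (T.fT k) =
      ∏ i : Fin T.m, ∏ t : Fin (T.r i),
        (((∑ j : Fin ((t : ℕ) + 1), q (T.entry i (Fin.castLE t.isLt j)) : ℕ) : k)
          - ((t : ℕ) : k)) := by
  unfold fT
  rw [map_prod]
  refine Finset.prod_congr rfl fun i _ => ?_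
  rw [map_prod]
  refine Finset.prod_congr rfl fun t _ => ?_
  rw [map_sub, map_sum]
  simp [Nat.cast_sum]

lemma sum_boxrow (hT : T.Multilinear) (q : Fin n → ℕ) (hq : ∀ v, v ∉ T.firstSet → q v = 0)
    (i : Fin T.m) (t : Fin (T.r i)) :
    (∑ j : Fin ((t : ℕ) + 1), q (T.entry i (Fin.castLE t.isLt j))) = q (T.first i) := by
  rw [Fin.sum_univ_succ]
  have h0 : T.entry i (Fin.castLE t.isLt 0) = T.first i := by
    show T.entry i _ = T.entry i _
    congr 1
  rw [h0]
  have hz : ∀ j : Fin (t : ℕ), q (T.entry i (Fin.castLE t.isLt j.succ)) = 0 := by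
    intro j
    apply hq
    intro hmem
    obtain ⟨i', hi'⟩ := mem_firstSet_iff.1 hmem
    have hs := box_inj hT hi'
    have hval := congrArg (fun s : ((a : Fin T.m) × Fin (T.r a)) => (s.2 : ℕ)) hs
    simp at hval
  simp [hz]

variable [CharZero k]

lemma eval_self_ne_zero (hT : T.Multilinear) :
    MvPolynomial.eval (fun v => (T.wt v : k)) (T.fT k) ≠ 0 := by
  rw [eval_fT, Finset.prod_ne_zero_iff]
  intro i _
  rw [Finset.prod_ne_zero_iff]
  intro t _
  rw [sum_boxrow hT _ (fun v hv => wt_eq_zero hv), wt_first hT]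
  intro hzero
  rw [sub_eq_zero] at hzero
  have h2 := Nat.cast_injective (R := k) hzero
  have ht := t.isLt
  omega

lemma firstSet_subset_of_eval_ne_zero (hT : T.Multilinear)
    (h : MvPolynomial.eval (fun v => (T'.wt v : k)) (T.fT k) ≠ 0) :
    T.firstSet ⊆ T'.firstSet := by
  rw [eval_fT, Finset.prod_ne_zero_iff] at h
  intro v hv
  obtain ⟨i, hi⟩ := mem_firstSet_iff.1 hv
  have hi2 := h i (Finset.mem_univ i)
  rw [Finset.prod_ne_zero_iff] at hi2
  have ht := hi2 ⟨0, T.rpos i⟩ (Finset.mem_univ _)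
  apply mem_firstSet_of_wt_ne
  intro hw
  apply ht
  have hsum : (∑ j : Fin ((((⟨0, T.rpos i⟩ : Fin (T.r i))) : ℕ) + 1),
      T'.wt (T.entry i (Fin.castLE (Fin.isLt _) j))) = T'.wt (T.first i) := by
    rw [Fin.sum_univ_succ, Fin.sum_univ_zero, add_zero]
    show T'.wt (T.entry i _) = T'.wt (T.entry i _)
    congr 2
  rw [hsum, hi, hw]
  simp

omit [CharZero k] in
lemma wt_row (hT : T.Multilinear) (hT' : T'.Multilinear)
    (hF : T.firstSet = T'.firstSet)
    (h : MvPolynomial.eval (fun v => (T'.wt v : k)) (T.fT k) ≠ 0) :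
    ∀ i : Fin T.m, T'.wt (T.first i) = T.r i := by
  have hq : ∀ v, v ∉ T.firstSet → T'.wt v = 0 := fun v hv => wt_eq_zero (by rw [← hF]; exact hv)
  rw [eval_fT, Finset.prod_ne_zero_iff] at h
  have hge : ∀ i : Fin T.m, T.r i ≤ T'.wt (T.first i) := by
    intro i
    have hi := h i (Finset.mem_univ i)
    rw [Finset.prod_ne_zero_iff] at hi
    by_contra hc
    push_neg at hc
    have ht := hi ⟨T'.wt (T.first i), hc⟩ (Finset.mem_univ _)
    apply ht
    rw [sum_boxrow hT _ hq]
    exact sub_self _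
  have hsum1 : ∑ i : Fin T.m, T'.wt (T.first i) = ∑ v ∈ T.firstSet, T'.wt v := by
    rw [firstSet, Finset.sum_image (fun x _ y _ hxy => first_injective hT hxy)]
  have hsum2 : ∑ v ∈ T'.firstSet, T'.wt v = ∑ i : Fin T'.m, T'.r i := by
    rw [firstSet, Finset.sum_image (fun x _ y _ hxy => first_injective hT' hxy)]
    exact Finset.sum_congr rfl fun i _ => wt_first hT' i
  have hdeg : ∑ i : Fin T.m, T.r i = ∑ i : Fin T'.m, T'.r i := by
    have h1 := hT.1
    have h2 := hT'.1
    unfold degree at h1 h2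
    omega
  have hsums : ∑ i : Fin T.m, T.r i = ∑ i : Fin T.m, T'.wt (T.first i) := by
    rw [hsum1, hF, hsum2, hdeg]
  intro i
  exact ((Finset.sum_eq_sum_iff_of_le (fun i _ => hge i)).1 hsums i (Finset.mem_univ i)).symm

end Eval

lemma entry_lt (hT : T.Multilinear) {i i' : Fin T.m} {j : Fin (T.r i)} {j' : Fin (T.r i')}
    (hj : 1 ≤ (j : ℕ)) (hj' : 1 ≤ (j' : ℕ))
    (h : i' < i ∨ (i = i' ∧ (j : ℕ) < (j' : ℕ))) : T.entry i j < T.entry i' j' := by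
  refine lt_of_le_of_ne (T.F2 i i' j j' hj hj' ?_) ?_
  · rcases h with h | ⟨h1, h2⟩
    · exact Or.inl h
    · exact Or.inr ⟨h1, le_of_lt h2⟩
  · intro he
    have hs := box_inj hT he
    have h1 := (Sigma.mk.inj_iff.1 hs).1
    have hval : (j : ℕ) = (j' : ℕ) :=
      congrArg (fun s : ((a : Fin T.m) × Fin (T.r a)) => (s.2 : ℕ)) hs
    rcases h with h | ⟨-, h2⟩
    · exact absurd h1 h.ne'
    · omega

lemma rowPair_strictAnti (hT : T.Multilinear) :
    StrictAnti (fun i : Fin T.m => toLex (T.r i, T.first i)) := by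
  intro i j hij
  rw [Prod.Lex.lt_iff]
  have hle := T.anti i j hij.le
  rcases lt_or_eq_of_le hle with h | h
  · exact Or.inl h
  · refine Or.inr ⟨h, ?_⟩
    refine lt_of_le_of_ne (T.F1 i j hij.le h.symm) ?_
    intro he
    exact absurd (first_injective hT he) hij.ne'

/-- The enumeration of the boxes in columns `≥ 2`, read from the bottom row to the top
row, left to right within each row. -/
def chainMap (T : NovikovTableau n) :
    (Σₗ (i : Fin T.m), Fin (T.r i.rev - 1)) → Fin n := fun x =>
  T.entry (ofLex x).1.rev ⟨((ofLex x).2 : ℕ) + 1, by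
    have := ((ofLex x).2).isLt
    omega⟩

lemma chainMap_strictMono (hT : T.Multilinear) : StrictMono (chainMap T) := by
  intro x y hxy
  rcases hxy with ⟨a, b, hij⟩ | ⟨a, b, hab⟩
  · exact entry_lt hT (by simp) (by simp) (Or.inl (Fin.rev_lt_rev.2 hij))
  · exact entry_lt hT (by simp) (by simp) (Or.inr ⟨rfl, Nat.succ_lt_succ hab⟩)

lemma range_chainMap (hT : T.Multilinear) :
    Set.range (chainMap T) = {v : Fin n | v ∉ T.firstSet ∧ v ≠ T.nose} := by
  ext v
  constructor
  · rintro ⟨x, rfl⟩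
    refine ⟨?_, entry_ne_nose hT⟩
    intro hmem
    obtain ⟨i', hi'⟩ := mem_firstSet_iff.1 hmem
    have hs := box_inj hT hi'
    have hval : (0 : ℕ) = ((ofLex x).2 : ℕ) + 1 :=
      congrArg (fun s : ((a : Fin T.m) × Fin (T.r a)) => (s.2 : ℕ)) hs
    omega
  · rintro ⟨h1, h2⟩
    rcases exists_box hT v with h | ⟨i, j, hj⟩
    · exact absurd h h2
    · have hj1 : 1 ≤ (j : ℕ) := by
        by_contra hc
        apply h1
        rw [mem_firstSet_iff]
        refine ⟨i, ?_⟩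
        rw [← hj]
        have hval : (j : ℕ) = 0 := by omega
        have hj0 : j = ⟨0, T.rpos i⟩ := Fin.ext hval
        rw [hj0]
        rfl
      have hlt : (j : ℕ) - 1 < T.r i.rev.rev - 1 := by
        rw [Fin.rev_rev]
        have := j.isLt
        omega
      refine ⟨toLex ⟨i.rev, ⟨(j : ℕ) - 1, hlt⟩⟩, ?_⟩
      have hsig : (⟨i.rev.rev, ⟨(j : ℕ) - 1 + 1, by have := j.isLt; omega⟩⟩ :
          (a : Fin T.m) × Fin (T.r a)) = ⟨i, j⟩ := by
        refine Sigma.ext (Fin.rev_rev i) ?_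
        rw [Fin.heq_ext_iff (congrArg T.r (Fin.rev_rev i))]
        simp
        omega
      calc chainMap T (toLex ⟨i.rev, ⟨(j : ℕ) - 1, hlt⟩⟩)
          = T.entry i.rev.rev ⟨(j : ℕ) - 1 + 1, by have := j.isLt; omega⟩ := rfl
        _ = T.entry i j := congrArg (fun s : ((a : Fin T.m) × Fin (T.r a)) => T.entry s.1 s.2) hsig
        _ = v := hj

lemma entry_congr (T : NovikovTableau n) {i i' : Fin T.m} {j : Fin (T.r i)} {j' : Fin (T.r i')}
    (hii : i = i') (hjj : (j : ℕ) = (j' : ℕ)) : T.entry i j = T.entry i' j' := by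
  subst hii
  rw [show j = j' from Fin.ext hjj]

/-- A multilinear Novikov tableau is determined by the set of its first-column entries
together with the lengths of the rows they head. -/
lemma eq_of_data (hT : T.Multilinear) (hT' : T'.Multilinear)
    (hF : T.firstSet = T'.firstSet)
    (hw : ∀ i : Fin T.m, T'.wt (T.first i) = T.r i) : T = T' := by
  have hnose : T.nose = T'.nose := by
    by_contra hne
    have h1 : T'.nose < T.nose :=
      lt_nose hT (Ne.symm hne) (by rw [hF]; exact nose_not_mem_firstSet hT')
    have h2 : T.nose < T'.nose :=
      lt_nose hT' hne (by rw [← hF]; exact nose_not_mem_firstSet hT)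
    exact absurd h1 (asymm h2)
  have hcard : ∀ (S : NovikovTableau n), S.Multilinear → S.firstSet.card = S.m := by
    intro S hS
    rw [firstSet, Finset.card_image_of_injective _ (first_injective hS), Finset.card_univ,
      Fintype.card_fin]
  have hm : T.m = T'.m := by rw [← hcard T hT, ← hcard T' hT', hF]
  have hA : ∀ i : Fin T.m, ∃ i' : Fin T'.m, T'.first i' = T.first i ∧ T'.r i' = T.r i := by
    intro i
    have hv : T.first i ∈ T'.firstSet := by rw [← hF]; exact mem_firstSet_iff.2 ⟨i, rfl⟩
    obtain ⟨i', hi'⟩ := mem_firstSet_iff.1 hv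
    refine ⟨i', hi', ?_⟩
    rw [← wt_first hT' i', hi', hw i]
  have hB : ∀ i' : Fin T'.m, ∃ i : Fin T.m, T.first i = T'.first i' ∧ T.r i = T'.r i' := by
    intro i'
    have hv : T'.first i' ∈ T.firstSet := by rw [hF]; exact mem_firstSet_iff.2 ⟨i', rfl⟩
    obtain ⟨i, hi⟩ := mem_firstSet_iff.1 hv
    refine ⟨i, hi, ?_⟩
    rw [← hw i, hi, wt_first hT' i']
  -- row data equality, via strict antitonicity
  have hcast : StrictMono (Fin.cast hm) := fun a b hab => hab
  have hganti : StrictAnti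
      (fun i : Fin T.m => toLex (T'.r (Fin.cast hm i), T'.first (Fin.cast hm i))) :=
    (rowPair_strictAnti hT').comp_strictMono hcast
  have hrange : Set.range (fun i : Fin T.m => toLex (T.r i, T.first i))
      = Set.range (fun i : Fin T.m => toLex (T'.r (Fin.cast hm i), T'.first (Fin.cast hm i))) := by
    ext p
    simp only [Set.mem_range]
    constructor
    · rintro ⟨i, rfl⟩
      obtain ⟨i', h1, h2⟩ := hA i
      refine ⟨Fin.cast hm.symm i', ?_⟩
      show toLex (T'.r i', T'.first i') = toLex (T.r i, T.first i)
      rw [h1, h2]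
    · rintro ⟨a, rfl⟩
      obtain ⟨i, h1, h2⟩ := hB (Fin.cast hm a)
      exact ⟨i, by rw [h1, h2]⟩
  have hfg := (StrictAnti.range_inj (rowPair_strictAnti hT) hganti).1 hrange
  have hrcast : ∀ i : Fin T.m, T.r i = T'.r (Fin.cast hm i) := fun i =>
    congrArg (fun p : ℕ ×ₗ Fin n => (ofLex p).1) (congrFun hfg i)
  have hfcast : ∀ i : Fin T.m, T.first i = T'.first (Fin.cast hm i) := fun i =>
    congrArg (fun p : ℕ ×ₗ Fin n => (ofLex p).2) (congrFun hfg i)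
  clear hfg hrange hganti hcast hA hB hw hcard
  obtain ⟨m, mpos, r, rpos, anti, entry, nose, q1, q2, q3⟩ := T
  obtain ⟨m', mpos', r', rpos', anti', entry', nose', q1', q2', q3'⟩ := T'
  have hm2 : m = m' := hm
  subst hm2
  have hr2 : r = r' := funext fun i => hrcast i
  subst hr2
  have hfirst : ∀ i : Fin m, entry i ⟨0, rpos i⟩ = entry' i ⟨0, rpos' i⟩ := fun i => hfcast i
  have hchain : chainMap (NovikovTableau.mk m mpos r rpos anti entry nose q1 q2 q3)
      = chainMap (NovikovTableau.mk m mpos' r rpos' anti' entry' nose' q1' q2' q3') := by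
    haveI : Finite ((Σₗ (i : Fin m), Fin (r i.rev - 1))) := Finite.of_equiv _ toLex
    haveI : WellFoundedLT ((Σₗ (i : Fin m), Fin (r i.rev - 1))) :=
      ⟨Finite.wellFounded_of_trans_of_irrefl _⟩
    haveI : WellFoundedLT ((Σₗ (i :
        Fin (NovikovTableau.mk m mpos r rpos anti entry nose q1 q2 q3).m),
        Fin ((NovikovTableau.mk m mpos r rpos anti entry nose q1 q2 q3).r i.rev - 1))) :=
      inferInstanceAs (WellFoundedLT ((Σₗ (i : Fin m), Fin (r i.rev - 1))))
    refine (StrictMono.range_inj (chainMap_strictMono hT)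
      (chainMap_strictMono
        (T := NovikovTableau.mk m mpos' r rpos' anti' entry' nose' q1' q2' q3') hT')).1 ?_
    rw [range_chainMap hT, range_chainMap hT', hF, hnose]
  have hent : ∀ (i : Fin m) (j : Fin (r i)), entry i j = entry' i j := by
    intro i j
    rcases Nat.eq_zero_or_pos (j : ℕ) with h0 | h1
    · have hj0 : j = ⟨0, rpos i⟩ := Fin.ext h0
      rw [hj0]
      exact hfirst i
    · have hx : (j : ℕ) - 1 < r i.rev.rev - 1 := by
        rw [Fin.rev_rev]
        have := j.isLt
        omega
      have hcx := congrFun hchain (toLex ⟨i.rev, ⟨(j : ℕ) - 1, hx⟩⟩)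
      have hL : chainMap (NovikovTableau.mk m mpos r rpos anti entry nose q1 q2 q3)
          (toLex ⟨i.rev, ⟨(j : ℕ) - 1, hx⟩⟩) = entry i j :=
        entry_congr _ (Fin.rev_rev i) (by simp; omega)
      have hR : chainMap (NovikovTableau.mk m mpos' r rpos' anti' entry' nose' q1' q2' q3')
          (toLex ⟨i.rev, ⟨(j : ℕ) - 1, hx⟩⟩) = entry' i j :=
        entry_congr _ (Fin.rev_rev i) (by simp; omega)
      rw [hL, hR] at hcx
      exact hcx
  have hent2 : entry = entry' := funext fun i => funext fun j => hent i j
  subst hent2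
  have hnose2 : nose = nose' := hnose
  subst hnose2
  rfl

end NovikovTableau

/-- The family `{f_T : T ∈ 𝕋_n}` of polynomials in `k[λ₁,…,λₙ]`, indexed by
the Novikov tableaux of degree `n` on distinct letters `x₁,…,xₙ`, is linearly independent
over `k`; i.e. every nonzero linear combination `Σ_T α_T f_T` is a nonzero polynomial. -/
theorem novikovTableau_fT_linearIndependent (k : Type*) [Field k] [CharZero k] (n : ℕ) :
    LinearIndependent k
      (fun T : {T : NovikovTableau n // T.Multilinear} => T.1.fT k) := by
  rw [linearIndependent_iff']
  intro s g hsum i0 hi0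
  by_contra hg0
  classical
  set s' := s.filter (fun T => g T ≠ 0) with hs'
  have hne : s'.Nonempty := ⟨i0, Finset.mem_filter.2 ⟨hi0, hg0⟩⟩
  obtain ⟨Tm, hTm, hmin⟩ := Finset.exists_min_image s'
    (fun T : {T : NovikovTableau n // T.Multilinear} => (T.1.firstSet).card) hne
  have hTms : Tm ∈ s := (Finset.mem_filter.1 hTm).1
  have hgTm : g Tm ≠ 0 := (Finset.mem_filter.1 hTm).2
  have h0 : ∀ T ∈ s, T ≠ Tm →
      g T * MvPolynomial.eval (fun v => (Tm.1.wt v : k)) (T.1.fT k) = 0 := by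
    intro T hTs hTne
    by_cases hgT : g T = 0
    · rw [hgT, zero_mul]
    · by_contra hnz
      have hmul : MvPolynomial.eval (fun v => (Tm.1.wt v : k)) (T.1.fT k) ≠ 0 :=
        fun h => hnz (by rw [h, mul_zero])
      have hsub := NovikovTableau.firstSet_subset_of_eval_ne_zero k T.2 hmul
      have hcardle := hmin T (Finset.mem_filter.2 ⟨hTs, hgT⟩)
      have hFeq : T.1.firstSet = Tm.1.firstSet :=
        Finset.eq_of_subset_of_card_le hsub hcardle
      have hweq := NovikovTableau.wt_row k T.2 Tm.2 hFeq hmul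
      exact hTne (Subtype.ext (NovikovTableau.eq_of_data T.2 Tm.2 hFeq hweq))
  have heval : ∑ T ∈ s, g T * MvPolynomial.eval (fun v => (Tm.1.wt v : k)) (T.1.fT k) = 0 := by
    have hc := congrArg (MvPolynomial.eval (fun v => (Tm.1.wt v : k))) hsum
    rw [map_sum, map_zero] at hc
    rw [← hc]
    refine Finset.sum_congr rfl fun T _ => ?_
    rw [MvPolynomial.smul_eq_C_mul, map_mul, MvPolynomial.eval_C]
  rw [Finset.sum_eq_single Tm h0 (fun h => absurd hTms h)] at heval
  exact hgTm ((mul_eq_zero.1 heval).resolve_right (NovikovTableau.eval_self_ne_zero k Tm.2))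
end

section
/- Let f(x,t₁,...,t_m) be a polynomial over an algebraically closed field k of characteristic 0, and let α₁ < ··· < α_m be nonnegative integers. If there is a point (c,c₁,...,c_m) ∈ k^{1+m} with f(c,c₁,...,c_m) = 0 and ∂f/∂t_m(c,c₁,...,c_m) ≠ 0, then the differential equation f(x, T^{(α₁)}, ..., T^{(α_m)}) = 0 has a solution T in the formal power series ring k[[x−c]]. -/
open PowerSeries MvPolynomial

namespace AlgODE

noncomputable def fct (a n : ℕ) : ℕ := ∏ i ∈ Finset.range a, (n + i + 1)
lemma fct_pos (a n : ℕ) : 0 < fct a n := Finset.prod_pos (fun i _ => by omega)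

variable {k : Type*} [Field k] [CharZero k]
set_option linter.unusedSectionVars false

lemma fct_ne_zero (a n : ℕ) : (fct a n : k) ≠ 0 := Nat.cast_ne_zero.mpr (fct_pos a n).ne'

lemma coeff_derivative_iterate (S : PowerSeries k) (a n : ℕ) :
    PowerSeries.coeff n ((⇑(derivative k))^[a] S) = (fct a n : k) * PowerSeries.coeff (n + a) S := by
  induction a generalizing S n with
  | zero => simp [fct]
  | succ a ih =>
    rw [Function.iterate_succ_apply, ih, coeff_derivative]
    rw [show fct (a+1) n = fct a n * (n + a + 1) from Finset.prod_range_succ _ _,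
      show n + (a+1) = n + a + 1 by ring]
    push_cast
    ring

noncomputable def args (m : ℕ) (α : Fin m → ℕ) (p : Fin (m+1) → k) (T : PowerSeries k) :
    Fin (m+1) → PowerSeries k :=
  Fin.cases (PowerSeries.X + PowerSeries.C (p 0))
    (fun j : Fin m => (⇑(PowerSeries.derivative k))^[α j] T)

noncomputable def Phi (m : ℕ) (f : MvPolynomial (Fin (m+1)) k) (α : Fin m → ℕ)
    (p : Fin (m+1) → k) (T : PowerSeries k) : PowerSeries k :=
  aeval (args m α p T) f

noncomputable def bco (m : ℕ) (α : Fin m → ℕ) (p : Fin (m+1) → k) (i : ℕ) : k :=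
  if h : ∃ j, α j = i then p (Classical.choose h).succ / (fct i 0 : k) else 0

noncomputable def acoef (m : ℕ) (f : MvPolynomial (Fin (m+1)) k) (α : Fin m → ℕ)
    (p : Fin (m+1) → k) (M : ℕ) (L : k) : ℕ → k
  | N =>
    if N ≤ M then bco m α p N
    else
      - (PowerSeries.coeff (N - M) (Phi m f α p (PowerSeries.mk fun j =>
          if _ : j < N then acoef m f α p M L j else 0))) / ((fct M (N - M) : k) * L)



lemma aeval_dvd_sub {σ : Type*} (f : MvPolynomial σ k) (s s' : σ → PowerSeries k)
    (n : ℕ) (h : ∀ j, (PowerSeries.X : PowerSeries k) ^ n ∣ (s j - s' j)) :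
    (PowerSeries.X : PowerSeries k) ^ n ∣ (aeval s f - aeval s' f) := by
  set I := Ideal.span {(PowerSeries.X : PowerSeries k) ^ n} with hI
  have key : ∀ j, Ideal.Quotient.mkₐ k I (s j) = Ideal.Quotient.mkₐ k I (s' j) := by
    intro j
    rw [← sub_eq_zero, ← map_sub]
    exact Ideal.Quotient.eq_zero_iff_mem.mpr (Ideal.mem_span_singleton.mpr (h j))
  have h2 : Ideal.Quotient.mkₐ k I (aeval s f - aeval s' f) = 0 := by
    rw [map_sub, comp_aeval_apply, comp_aeval_apply, sub_eq_zero]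
    exact congrArg (fun g => MvPolynomial.aeval g f) (funext key)
  exact Ideal.mem_span_singleton.mp (Ideal.Quotient.eq_zero_iff_mem.mp h2)

lemma constantCoeff_aeval {σ : Type*} (f : MvPolynomial σ k) (s : σ → PowerSeries k) :
    PowerSeries.constantCoeff (aeval s f) = eval (fun j => PowerSeries.constantCoeff (s j)) f := by
  rw [aeval_def, eval₂_comp_left (PowerSeries.constantCoeff) (algebraMap k _) s f]
  have h1 : (PowerSeries.constantCoeff).comp (algebraMap k (PowerSeries k)) = RingHom.id k := by
    ext r; simp [PowerSeries.algebraMap_apply]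
  rw [h1, eval]
  rfl

lemma key_coeff {m : ℕ} (f : MvPolynomial (Fin (m+1)) k) {n : ℕ} (hn : 1 ≤ n)
    (s s' : Fin (m+1) → PowerSeries k) (c' : k)
    (hx : ∀ j, j ≠ Fin.last m → (PowerSeries.X : PowerSeries k) ^ (n+1) ∣ (s' j - s j))
    (hlast : s' (Fin.last m) = s (Fin.last m) + PowerSeries.C c' * PowerSeries.X ^ n) :
    PowerSeries.coeff n (aeval s' f) = PowerSeries.coeff n (aeval s f)
      + c' * eval (fun j => PowerSeries.constantCoeff (s j)) (pderiv (Fin.last m) f) := by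
  have hdvdall : ∀ j, (PowerSeries.X : PowerSeries k) ^ n ∣ (s' j - s j) := by
    intro j
    by_cases hj : j = Fin.last m
    · subst hj; rw [hlast, add_sub_cancel_left]
      exact dvd_mul_left _ _
    · exact dvd_trans (pow_dvd_pow _ (Nat.le_succ n)) (hx j hj)
  have hconst : ∀ j, PowerSeries.constantCoeff (s' j) = PowerSeries.constantCoeff (s j) := by
    intro j
    have h := (X_pow_dvd_iff).mp (hdvdall j) 0 (by omega)
    rw [map_sub, sub_eq_zero] at h
    rw [← coeff_zero_eq_constantCoeff_apply, ← coeff_zero_eq_constantCoeff_apply]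
    exact h
  induction f using MvPolynomial.induction_on with
  | C a => simp
  | add g h ihg ihh =>
      rw [map_add, map_add, map_add, map_add, map_add, ihg, ihh, map_add]
      ring
  | mul_X g j ihg =>
      set q : Fin (m+1) → k := fun j => PowerSeries.constantCoeff (s j) with hq
      set A := aeval s g with hA
      set A' := aeval s' g with hA'
      set K := eval q (pderiv (Fin.last m) g) with hK
      obtain ⟨U, hU⟩ := aeval_dvd_sub g s' s n (fun j => hdvdall j)
      have hcoeffU : PowerSeries.coeff 0 U = c' * K := by
        have h1 : PowerSeries.coeff n (A' - A) = c' * K := by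
          rw [map_sub, ihg]; ring
        rw [hU, coeff_X_pow_mul'] at h1
        simpa using h1
      have haeval : ∀ t : Fin (m+1) → PowerSeries k,
          aeval t (g * MvPolynomial.X j) = aeval t g * t j := by
        intro t; rw [map_mul, aeval_X]
      have hsplit : A' * s' j = A * s j + (A' - A) * s' j + A * (s' j - s j) := by ring
      have term1 : PowerSeries.coeff n ((A' - A) * s' j) = c' * K * q j := by
        rw [hU, mul_assoc, coeff_X_pow_mul']
        simp only [le_refl, if_pos, Nat.sub_self]
        rw [coeff_zero_eq_constantCoeff_apply, map_mul, hconst j,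
          ← coeff_zero_eq_constantCoeff_apply, hcoeffU, hq]
      have term2 : PowerSeries.coeff n (A * (s' j - s j)) =
          (if j = Fin.last m then c' * eval q g else 0) := by
        by_cases hj : j = Fin.last m
        · subst hj
          rw [hlast, if_pos rfl, add_sub_cancel_left,
            show A * (PowerSeries.C c' * PowerSeries.X ^ n)
              = (A * PowerSeries.C c') * PowerSeries.X ^ n by ring,
            coeff_mul_X_pow']
          simp only [le_refl, if_pos, Nat.sub_self]
          rw [coeff_zero_eq_constantCoeff_apply, map_mul, PowerSeries.constantCoeff_C,
            constantCoeff_aeval]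
          ring
        · rw [if_neg hj]
          obtain ⟨W, hW⟩ := hx j hj
          rw [hW, show A * ((PowerSeries.X : PowerSeries k) ^ (n+1) * W)
              = (PowerSeries.X : PowerSeries k) ^ (n+1) * (A * W) by ring,
            coeff_X_pow_mul', if_neg (by omega)]
      have hpd : eval q (pderiv (Fin.last m) (g * MvPolynomial.X j))
          = K * q j + (if j = Fin.last m then eval q g else 0) := by
        classical
        rw [pderiv_mul, pderiv_X, map_add, map_mul, map_mul, eval_X, ← hK]
        by_cases hj : j = Fin.last m
        · subst hj; rw [Pi.single_eq_same, if_pos rfl]; simp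
        · rw [Pi.single_eq_of_ne hj, if_neg hj]; simp
      rw [haeval, haeval, hsplit, map_add, map_add, term1, term2, hpd, ← hA]
      by_cases hj : j = Fin.last m
      · rw [if_pos hj, if_pos hj]; ring
      · rw [if_neg hj, if_neg hj]; ring

lemma coeff_Phi_congr (m : ℕ) (f : MvPolynomial (Fin (m+1)) k) (α : Fin m → ℕ)
    (p : Fin (m+1) → k) (Mb n : ℕ) (hle : ∀ j, α j ≤ Mb)
    (T T' : PowerSeries k) (h : ∀ i, i ≤ n + Mb → PowerSeries.coeff i T = PowerSeries.coeff i T') :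
    PowerSeries.coeff n (Phi m f α p T) = PowerSeries.coeff n (Phi m f α p T') := by
  have hdvd : ∀ j, (PowerSeries.X : PowerSeries k) ^ (n+1)
      ∣ (args m α p T j - args m α p T' j) := by
    intro j
    refine Fin.cases ?_ ?_ j
    · simp [args]
    · intro j'
      simp only [args, Fin.cases_succ]
      rw [X_pow_dvd_iff]
      intro i hi
      rw [map_sub, coeff_derivative_iterate, coeff_derivative_iterate,
        h (i + α j') (by have := hle j'; omega)]
      ring
  have hd := aeval_dvd_sub f (args m α p T) (args m α p T') (n+1) hdvd
  have h2 := (X_pow_dvd_iff.mp hd) n (by omega)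
  rw [map_sub, sub_eq_zero] at h2
  exact h2

theorem main (m : ℕ) (hm : 0 < m) (f : MvPolynomial (Fin (m+1)) k) (α : Fin m → ℕ)
    (hα : StrictMono α) (p : Fin (m+1) → k) (h0 : eval p f = 0)
    (h1 : eval p (pderiv (Fin.last m) f) ≠ 0) :
    ∃ T : PowerSeries k, Phi m f α p T = 0 := by
  classical
  set jm : Fin m := ⟨m-1, by omega⟩ with hjm
  set M := α jm with hM
  set L := eval p (pderiv (Fin.last m) f) with hL
  set a : ℕ → k := acoef m f α p M L with ha
  set T : PowerSeries k := PowerSeries.mk a with hT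
  set Tp : ℕ → PowerSeries k :=
    fun N => PowerSeries.mk fun j => if _ : j < N then a j else 0 with hTpdef
  have hαle : ∀ j, α j ≤ M := by
    intro j
    exact hα.monotone (show j ≤ jm from by
      rw [Fin.le_def]; simp only [hjm]; omega)
  have hlast_succ : jm.succ = Fin.last m := by
    apply Fin.ext
    simp only [Fin.val_succ, Fin.val_last, hjm]
    omega
  have hbco : ∀ j : Fin m, bco m α p (α j) = p j.succ / (fct (α j) 0 : k) := by
    intro j
    rw [bco, dif_pos ⟨j, rfl⟩]
    have hc : Classical.choose (⟨j, rfl⟩ : ∃ j', α j' = α j) = j :=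
      hα.injective (Classical.choose_spec (⟨j, rfl⟩ : ∃ j', α j' = α j))
    rw [hc]
  have ha_le : ∀ i, i ≤ M → a i = bco m α p i := by
    intro i hi
    rw [ha, acoef, if_pos hi]
  have hcoeffT : ∀ i, PowerSeries.coeff i T = a i := fun i => coeff_mk i a
  have hcoeffTp : ∀ N i, PowerSeries.coeff i (Tp N) = if i < N then a i else 0 := by
    intro N i
    simp [hTpdef, coeff_mk]
  have hconstargs : ∀ T' : PowerSeries k,
      (∀ j : Fin m, PowerSeries.coeff (α j) T' = bco m α p (α j)) →
      (fun i => PowerSeries.constantCoeff (args m α p T' i)) = p := by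
    intro T' hco
    funext i
    refine Fin.cases ?_ ?_ i
    · simp [args]
    · intro j
      simp only [args, Fin.cases_succ]
      rw [← coeff_zero_eq_constantCoeff_apply, coeff_derivative_iterate, zero_add,
        hco j, hbco j, mul_div_cancel₀ _ (fct_ne_zero (α j) 0)]
  have key : ∀ n, PowerSeries.coeff n (Phi m f α p T) = 0 := by
    intro n
    rcases Nat.eq_zero_or_pos n with hn | hn
    · subst hn
      rw [Phi, coeff_zero_eq_constantCoeff_apply, constantCoeff_aeval,
        hconstargs T (fun j => by rw [hcoeffT, ha_le _ (hαle j)]), h0]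
    · set N := n + M with hNdef
      have hNM : ¬ (N ≤ M) := by omega
      have step1 : PowerSeries.coeff n (Phi m f α p T) = PowerSeries.coeff n (Phi m f α p (Tp (N+1))) := by
        apply coeff_Phi_congr m f α p M n hαle
        intro i hi
        rw [hcoeffT, hcoeffTp, if_pos (by omega)]
      have hq : (fun i => PowerSeries.constantCoeff (args m α p (Tp N) i)) = p := by
        apply hconstargs
        intro j
        rw [hcoeffTp, if_pos (by have := hαle j; omega), ha_le _ (hαle j)]
      have hlast : args m α p (Tp (N+1)) (Fin.last m)
          = args m α p (Tp N) (Fin.last m)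
            + PowerSeries.C (a N * (fct M n : k)) * PowerSeries.X ^ n := by
        rw [← hlast_succ]
        simp only [args, Fin.cases_succ, ← hM]
        ext i
        rw [map_add, coeff_derivative_iterate, coeff_derivative_iterate,
          hcoeffTp, hcoeffTp, coeff_C_mul_X_pow]
        rcases eq_or_ne i n with hi | hi
        · subst hi
          rw [if_pos rfl, if_pos (by omega), if_neg (by omega)]
          ring
        · rw [if_neg hi, add_zero]
          congr 1
          rcases lt_trichotomy (i + M) N with hc | hc | hc
          · rw [if_pos (by omega), if_pos (by omega)]
          · omega
          · rw [if_neg (by omega), if_neg (by omega)]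
      have hx : ∀ j, j ≠ Fin.last m → (PowerSeries.X : PowerSeries k) ^ (n+1)
          ∣ (args m α p (Tp (N+1)) j - args m α p (Tp N) j) := by
        intro j hj
        refine Fin.cases ?_ ?_ j hj
        · intro _; simp [args]
        · intro j' hj'
          have hj'ne : j' ≠ jm := fun h => hj' (by rw [h, hlast_succ])
          have hαlt : α j' < M := by
            apply hα
            rw [Fin.lt_def]
            have h2 := j'.2
            have : (j' : ℕ) ≠ m - 1 := fun h => hj'ne (Fin.ext (by simp [hjm, h]))
            simp only [hjm]
            omega
          simp only [args, Fin.cases_succ]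
          rw [X_pow_dvd_iff]
          intro i hi
          rw [map_sub, coeff_derivative_iterate, coeff_derivative_iterate,
            hcoeffTp, hcoeffTp]
          rcases lt_trichotomy (i + α j') N with hc | hc | hc
          · rw [if_pos (by omega), if_pos (by omega)]; ring
          · omega
          · rw [if_neg (by omega), if_neg (by omega)]; ring
      have step2 : PowerSeries.coeff n (Phi m f α p (Tp (N+1)))
          = PowerSeries.coeff n (Phi m f α p (Tp N)) + (a N * (fct M n : k)) * L := by
        rw [Phi, Phi, key_coeff f hn (args m α p (Tp N)) (args m α p (Tp (N+1)))
          (a N * (fct M n : k)) hx hlast, hq, hL]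
      have step3 : a N = - PowerSeries.coeff n (Phi m f α p (Tp N)) / ((fct M n : k) * L) := by
        rw [ha, acoef, if_neg hNM]
        rw [show N - M = n by omega]
      rw [step1, step2, step3]
      have hne : ((fct M n : k) * L) ≠ 0 := mul_ne_zero (fct_ne_zero _ _) h1
      set CC := PowerSeries.coeff n (Phi m f α p (Tp N)) with hCC
      rw [neg_div, neg_mul, neg_mul, div_mul_eq_mul_div, div_mul_eq_mul_div,
        mul_assoc, mul_div_cancel_right₀ _ hne, add_neg_cancel]
  exact ⟨T, PowerSeries.ext fun n => by rw [key n, map_zero]⟩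


end AlgODE



/-- Let `f(x,t₁,…,t_m)` be a polynomial over an algebraically closed field
`k` of characteristic 0 and `α₁ < ⋯ < α_m` nonnegative integers. If there is a point
`(c,c₁,…,c_m) ∈ k^{1+m}` with `f(c,c₁,…,c_m) = 0` and `∂f/∂t_m(c,c₁,…,c_m) ≠ 0`, then the
differential equation `f(x, T^{(α₁)}, …, T^{(α_m)}) = 0` has a solution `T` in the formal
power series ring `k[[x−c]]` (below `T` is a power series in the variable `u = x − c`,
so the variable `x` is substituted by `u + c`, and `T^{(α)}` is the `α`-th formal
derivative of `T`). -/
theorem algebraic_ode_has_power_series_solution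
    (k : Type*) [Field k] [CharZero k] [IsAlgClosed k] (m : ℕ) (hm : 0 < m)
    (f : MvPolynomial (Fin (m + 1)) k) (α : Fin m → ℕ) (hα : StrictMono α)
    (p : Fin (m + 1) → k)
    (h0 : MvPolynomial.eval p f = 0)
    (h1 : MvPolynomial.eval p (MvPolynomial.pderiv (Fin.last m) f) ≠ 0) :
    ∃ T : PowerSeries k,
      MvPolynomial.aeval
        (Fin.cases (PowerSeries.X + PowerSeries.C (p 0))
          (fun j : Fin m => (⇑(PowerSeries.derivative k))^[α j] T)) f = 0 := by
  
  obtain ⟨T, hT⟩ := AlgODE.main m hm f α hα p h0 h1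
  exact ⟨T, hT⟩
end

section
/- If h ∈ k[x,t₁,...,t_r] is irreducible over an algebraically closed field k and h genuinely depends on t_r, then there exists a point L ∈ k^{1+r} with h(L) = 0 and (∂h/∂t_r)(L) ≠ 0. -/
open MvPolynomial

/-- Coefficient formula for the partial derivative. -/
lemma coeff_pderiv_aux {k : Type*} [CommRing k] {n : ℕ} (i : Fin n)
    (f : MvPolynomial (Fin n) k) (m : Fin n →₀ ℕ) :
    coeff m (pderiv i f) = coeff (m + Finsupp.single i 1) f * ((m i + 1 : ℕ) : k) := by
  induction f using MvPolynomial.induction_on' with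
  | monomial u a =>
    rw [pderiv_monomial, coeff_monomial, coeff_monomial]
    by_cases hu : u = m + Finsupp.single i 1
    · subst hu
      have h1 := add_tsub_cancel_right (a := m) (b := Finsupp.single i 1)
      have h2 : (m + Finsupp.single i 1 : Fin n →₀ ℕ) i = m i + 1 := by
        rw [Finsupp.add_apply, Finsupp.single_eq_same]
      rw [if_pos h1, if_pos rfl, h2]
    · rw [if_neg hu, zero_mul]
      by_cases hui : u i = 0
      · split_ifs <;> simp [hui]
      · have hle : Finsupp.single i 1 ≤ u := by
          rw [Finsupp.single_le_iff]; omega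
        have : u - Finsupp.single i 1 ≠ m := by
          intro hcon
          apply hu
          rw [← hcon, tsub_add_cancel_of_le hle]
        rw [if_neg this]
  | add p q hp hq =>
    simp only [map_add, coeff_add, hp, hq, add_mul]

/-- `degreeOf` is additive on products of nonzero polynomials in the first variable. -/
lemma degreeOf_zero_mul_aux {k : Type*} [Field k] {n : ℕ}
    {p q : MvPolynomial (Fin (n + 1)) k} (hp : p ≠ 0) (hq : q ≠ 0) :
    degreeOf 0 (p * q) = degreeOf 0 p + degreeOf 0 q := by
  have hp' : finSuccEquiv k n p ≠ 0 := by
    simpa using (map_ne_zero_iff _ (finSuccEquiv k n).injective).2 hp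
  have hq' : finSuccEquiv k n q ≠ 0 := by
    simpa using (map_ne_zero_iff _ (finSuccEquiv k n).injective).2 hq
  rw [← natDegree_finSuccEquiv, ← natDegree_finSuccEquiv, ← natDegree_finSuccEquiv,
    map_mul, Polynomial.natDegree_mul hp' hq']

/-- `degreeOf` is additive on products of nonzero polynomials in any variable. -/
lemma degreeOf_mul_aux {k : Type*} [Field k] {n : ℕ} (i : Fin (n + 1))
    {p q : MvPolynomial (Fin (n + 1)) k} (hp : p ≠ 0) (hq : q ≠ 0) :
    degreeOf i (p * q) = degreeOf i p + degreeOf i q := by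
  classical
  set e : Fin (n + 1) ≃ Fin (n + 1) := Equiv.swap 0 i with he
  have h0 : e 0 = i := Equiv.swap_apply_left 0 i
  have hinj : Function.Injective e := e.injective
  have hee : ⇑e ∘ ⇑e = id := by
    funext x; simp [he, Equiv.swap_apply_self]
  have hr : ∀ f : MvPolynomial (Fin (n + 1)) k,
      degreeOf i f = degreeOf 0 (rename e f) := by
    intro f
    have h1 := degreeOf_rename_of_injective (p := rename e f) hinj 0
    rw [h0, rename_rename, hee, rename_id] at h1
    exact h1
  have hp' : rename (⇑e) p ≠ 0 := by
    simpa using (map_ne_zero_iff _ (renameEquiv k e).injective).2 hp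
  have hq' : rename (⇑e) q ≠ 0 := by
    simpa using (map_ne_zero_iff _ (renameEquiv k e).injective).2 hq
  rw [hr, hr, hr, map_mul, degreeOf_zero_mul_aux hp' hq']

/-- If `h ∈ k[x,t₁,…,t_r]` is irreducible over an algebraically closed field
`k` of characteristic 0 and `h` genuinely depends on `t_r`, then there is a point
`L ∈ k^{1+r}` with `h(L) = 0` and `(∂h/∂t_r)(L) ≠ 0`. -/
theorem irreducible_exists_nonsingular_point
    (k : Type*) [Field k] [CharZero k] [IsAlgClosed k] (r : ℕ)
    (h : MvPolynomial (Fin (r + 1)) k) (hirr : Irreducible h)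
    (hdep : 0 < h.degreeOf (Fin.last r)) :
    ∃ L : Fin (r + 1) → k,
      MvPolynomial.eval L h = 0 ∧
      MvPolynomial.eval L (MvPolynomial.pderiv (Fin.last r) h) ≠ 0 := by
  classical
  set i : Fin (r + 1) := Fin.last r
  set g : MvPolynomial (Fin (r + 1)) k := pderiv i h with hg
  set d : ℕ := h.degreeOf i with hd
  have hh0 : h ≠ 0 := hirr.ne_zero
  -- g ≠ 0
  have hg0 : g ≠ 0 := by
    obtain ⟨m, hm, hmd⟩ := Finset.exists_mem_eq_sup h.support
      (support_nonempty.2 hh0) (fun m => m i)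
    rw [← degreeOf_eq_sup] at hmd
    have hmi : 1 ≤ m i := by omega
    have hle : Finsupp.single i 1 ≤ m := by rw [Finsupp.single_le_iff]; omega
    intro hzero
    have hc : coeff (m - Finsupp.single i 1) g = 0 := by rw [hzero]; simp
    rw [coeff_pderiv_aux, tsub_add_cancel_of_le hle] at hc
    have hmem := mem_support_iff.1 hm
    have hi : ((m - Finsupp.single i 1 : Fin (r + 1) →₀ ℕ) i + 1 : ℕ) = m i := by
      rw [Finsupp.tsub_apply, Finsupp.single_eq_same]; omega
    rw [hi] at hc
    rcases mul_eq_zero.1 hc with h1 | h2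
    · exact hmem h1
    · exact (Nat.cast_ne_zero.2 (by omega : m i ≠ 0)) h2
  -- degreeOf i g < d
  have hgdeg : degreeOf i g < d := by
    rw [degreeOf_lt_iff hdep]
    intro m hm
    have hc : coeff (m + Finsupp.single i 1) h ≠ 0 := by
      intro hzero
      apply mem_support_iff.1 hm
      rw [coeff_pderiv_aux, hzero, zero_mul]
    have := monomial_le_degreeOf i (mem_support_iff.2 hc)
    simp only [Finsupp.add_apply, Finsupp.single_eq_same] at this
    omega
  -- Nullstellensatz argument
  by_contra hcon
  push_neg at hcon
  have hgv : g ∈ vanishingIdeal k (zeroLocus k (Ideal.span {h})) := by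
    rw [mem_vanishingIdeal_iff]
    intro x hx
    exact hcon x (hx h (Ideal.subset_span rfl))
  rw [vanishingIdeal_zeroLocus_eq_radical] at hgv
  obtain ⟨n, hn⟩ := hgv
  rw [Ideal.mem_span_singleton] at hn
  have hprime : Prime h := hirr.prime
  have hdvd : h ∣ g := hprime.dvd_of_dvd_pow hn
  obtain ⟨c, hc⟩ := hdvd
  have hc0 : c ≠ 0 := by
    intro hzero; apply hg0; rw [hc, hzero, mul_zero]
  have := degreeOf_mul_aux i hh0 hc0
  rw [← hc] at this
  omega
end
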